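/- Fix x > 0. The function g_+(t) = (x+γ)t - ln Γ(1-t) on (0,1) attains a strictly positive maximum at t_+ = 1 - ψ^{-1}(-x-γ). -/

import Mathlib

noncomputable def digamma (x : ℝ) : ℝ := deriv (fun y => Real.log (Real.Gamma y)) x

open Real Set Filter Topology

lemma gp_ne_neg_nat {y : ℝ} (hy : 0 < y) : ∀ m : ℕ, y ≠ -m :=
  fun m => ne_of_gt (lt_of_le_of_lt (neg_nonpos.2 (Nat.cast_nonneg m)) hy)

lemma hasDerivAt_logGamma {y : ℝ} (hy : 0 < y) :
    HasDerivAt (fun z => Real.log (Real.Gamma z)) (digamma y) y := by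
  have h : DifferentiableAt ℝ (fun z => Real.log (Real.Gamma z)) y :=
    (Real.differentiableAt_Gamma (gp_ne_neg_nat hy)).log (Real.Gamma_pos_of_pos hy).ne'
  exact h.hasDerivAt

lemma digamma_one : digamma 1 = -Real.eulerMascheroniConstant := by
  have h := Real.hasDerivAt_Gamma_one.log (by simp [Real.Gamma_one])
  have := h.deriv
  simpa [digamma, Real.Gamma_one] using this

lemma digamma_add_one {y : ℝ} (hy : 0 < y) : digamma (y + 1) = digamma y + 1 / y := by
  have h1 : HasDerivAt (fun z => Real.log (Real.Gamma (z + 1))) (digamma (y + 1)) y := by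
    have := (hasDerivAt_logGamma (by linarith : (0:ℝ) < y + 1)).comp y
      ((hasDerivAt_id y).add_const 1)
    simpa [Function.comp_def] using this
  have h2 : HasDerivAt (fun z => Real.log (Real.Gamma z) + Real.log z)
      (digamma y + 1 / y) y := by
    have := (hasDerivAt_logGamma hy).add (Real.hasDerivAt_log hy.ne')
    simpa [one_div, Pi.add_def] using this
  have heq : (fun z => Real.log (Real.Gamma (z + 1)))
      =ᶠ[𝓝 y] (fun z => Real.log (Real.Gamma z) + Real.log z) := by
    filter_upwards [eventually_gt_nhds hy] with z hz
    rw [Real.Gamma_add_one hz.ne', Real.log_mul hz.ne' (Real.Gamma_pos_of_pos hz).ne']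
    ring
  exact (h1.congr_of_eventuallyEq heq.symm).unique h2

lemma digamma_monotoneOn : MonotoneOn digamma (Set.Ioi 0) := by
  have h := Real.convexOn_log_Gamma.monotoneOn_deriv
    (fun y hy => (Real.differentiableAt_Gamma (gp_ne_neg_nat hy)).log
      (Real.Gamma_pos_of_pos hy).ne')
  intro a ha b hb hab
  exact h ha hb hab

lemma digamma_strictMonoOn : StrictMonoOn digamma (Set.Ioi 0) := by
  intro a ha b hb hab
  rcases lt_or_eq_of_le (digamma_monotoneOn ha hb hab.le) with h | h
  · exact h
  · exfalso
    have ha' : (0:ℝ) < a := ha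
    have hb' : (0:ℝ) < b := hb
    have h1 : digamma (a + 1) ≤ digamma (b + 1) :=
      digamma_monotoneOn (Set.mem_Ioi.mpr (by linarith)) (Set.mem_Ioi.mpr (by linarith)) (by linarith)
    rw [digamma_add_one ha', digamma_add_one hb', h] at h1
    have : 1 / b < 1 / a := one_div_lt_one_div_of_lt ha' hab
    linarith

theorem gPlus_max (x : ℝ) (hx : 0 < x) :
    letI γ := Real.eulerMascheroniConstant
    letI tPlus := 1 - Function.invFunOn digamma (Set.Ioi 0) (-x - γ)
    letI g := fun t : ℝ => (x + γ) * t - Real.log (Real.Gamma (1 - t))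
    tPlus ∈ Set.Ioo (0:ℝ) 1 ∧ 0 < g tPlus ∧ ∀ t ∈ Set.Ioo (0:ℝ) 1, g t ≤ g tPlus := by
  beta_reduce
  set γ : ℝ := Real.eulerMascheroniConstant with hγ
  set v : ℝ := -x - γ with hv
  set u : ℝ := Function.invFunOn digamma (Set.Ioi 0) v with hu
  set f : ℝ → ℝ := fun z => Real.log (Real.Gamma z) with hf
  -- small ε with digamma ε < v
  set ε : ℝ := min (1/2) (1/(x+2)) with hε
  have hε0 : 0 < ε := lt_min (by norm_num) (by positivity)
  have hε1 : ε < 1 := lt_of_le_of_lt (min_le_left _ _) (by norm_num)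
  have hd2 : digamma 2 = -γ + 1 := by
    have h := digamma_add_one one_pos
    rw [digamma_one] at h
    norm_num at h
    linarith [h]
  have hεv : digamma ε < v := by
    have h1 : digamma ε = digamma (ε + 1) - 1 / ε := by
      rw [digamma_add_one hε0]; ring
    have h2 : digamma (ε + 1) ≤ digamma 2 :=
      digamma_monotoneOn (Set.mem_Ioi.mpr (by linarith)) (by norm_num) (by linarith)
    have h3 : (x + 2 : ℝ) ≤ 1 / ε := by
      have h4 : ε ≤ 1/(x+2) := min_le_right _ _
      rw [le_div_iff₀ (by positivity)] at h4
      rw [le_div_iff₀ hε0]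
      linarith
    rw [hd2] at h2
    rw [h1, hv]
    linarith
  -- Darboux: exists c in Ioo ε 1 with digamma c = v
  have hder : ∀ y ∈ Set.Icc ε 1, HasDerivWithinAt f (digamma y) (Set.Icc ε 1) y :=
    fun y hy => (hasDerivAt_logGamma (lt_of_lt_of_le hε0 hy.1)).hasDerivWithinAt
  have hv1 : v < digamma 1 := by rw [digamma_one, hv]; linarith
  obtain ⟨c, hc, hcv⟩ := exists_hasDerivWithinAt_eq_of_gt_of_lt hε1.le hder hεv hv1
  have hc0 : c ∈ Set.Ioi (0:ℝ) := lt_trans hε0 hc.1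
  have hex : ∃ a ∈ Set.Ioi (0:ℝ), digamma a = v := ⟨c, hc0, hcv⟩
  have hu0 : u ∈ Set.Ioi (0:ℝ) := hu ▸ Function.invFunOn_mem hex
  have hu0' : (0:ℝ) < u := hu0
  have huv : digamma u = v := hu ▸ Function.invFunOn_eq hex
  have hu1 : u < 1 := by
    by_contra h
    push_neg at h
    rcases eq_or_lt_of_le h with h' | h'
    · rw [h', huv] at hv1; exact lt_irrefl _ hv1
    · have := digamma_strictMonoOn (Set.mem_Ioi.mpr one_pos) hu0 h'
      rw [huv, digamma_one] at this
      rw [hv] at this; linarith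
  have htmem : (1 - u) ∈ Set.Ioo (0:ℝ) 1 := ⟨by linarith, by linarith⟩
  have hmax : ∀ t ∈ Set.Ioo (0:ℝ) 1,
      (x + γ) * t - f (1 - t) ≤ (x + γ) * (1 - u) - f (1 - (1 - u)) := by
    intro t ht
    have hb0 : (0:ℝ) < 1 - t := by linarith [ht.2]
    set b : ℝ := 1 - t with hbb
    have huu : 1 - (1 - u) = u := by ring
    rw [huu]
    have key : f u + v * (b - u) ≤ f b := by
      rcases lt_trichotomy u b with hlt | heq | hgt'
      · have h := Real.convexOn_log_Gamma.le_slope_of_hasDerivAt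
          (Set.mem_Ioi.mpr hu0') (Set.mem_Ioi.mpr hb0) hlt (hasDerivAt_logGamma hu0')
        rw [huv, slope_def_field] at h
        rw [le_div_iff₀ (by linarith : (0:ℝ) < b - u)] at h
        have : (Real.log ∘ Real.Gamma) b = f b := rfl
        have : (Real.log ∘ Real.Gamma) u = f u := rfl
        simp only [Function.comp_apply] at h
        linarith [h]
      · simp [heq]
      · have h := Real.convexOn_log_Gamma.slope_le_of_hasDerivAt
          (Set.mem_Ioi.mpr hb0) (Set.mem_Ioi.mpr hu0') hgt' (hasDerivAt_logGamma hu0')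
        rw [huv, slope_def_field] at h
        rw [div_le_iff₀ (by linarith : (0:ℝ) < u - b)] at h
        simp only [Function.comp_apply] at h
        have hr : v * (u - b) = -(v * (b - u)) := by ring
        rw [hr] at h
        linarith [h]
    have hcv' : x + γ = -v := by rw [hv]; ring
    have ht' : t = 1 - b := by rw [hbb]; ring
    rw [hcv', ht']
    nlinarith [key]
  refine ⟨htmem, ?_, hmax⟩
  -- positivity: find t0 with g t0 > 0
  set g : ℝ → ℝ := fun t => (x + γ) * t - f (1 - t) with hg
  have hg0 : HasDerivAt g x 0 := by
    have hinner : HasDerivAt (fun t : ℝ => 1 - t) (-1) 0 := by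
      simpa using (hasDerivAt_id (0:ℝ)).const_sub 1
    have houter : HasDerivAt f (digamma 1) (1 - 0) := by
      simpa using hasDerivAt_logGamma one_pos
    have hcomp := houter.comp 0 hinner
    have hlin : HasDerivAt (fun t : ℝ => (x + γ) * t) (x + γ) 0 := by
      simpa using (hasDerivAt_id (0:ℝ)).const_mul (x + γ)
    have hsub := hlin.sub hcomp
    have heq : (x + γ) - digamma 1 * (-1) = x := by rw [digamma_one]; ring
    rw [heq] at hsub
    exact hsub
  have hslope : Tendsto (slope g 0) (𝓝[≠] 0) (𝓝 x) :=
    hasDerivAt_iff_tendsto_slope.mp hg0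
  have hle : 𝓝[Set.Ioo (0:ℝ) 1] 0 ≤ 𝓝[≠] (0:ℝ) :=
    nhdsWithin_mono 0 (fun y hy => ne_of_gt hy.1)
  have hne : (𝓝[Set.Ioo (0:ℝ) 1] (0:ℝ)).NeBot := by
    refine mem_closure_iff_nhdsWithin_neBot.mp ?_
    rw [closure_Ioo (by norm_num : (0:ℝ) ≠ 1)]
    exact ⟨le_refl 0, by norm_num⟩
  have hev : ∀ᶠ t in 𝓝[Set.Ioo (0:ℝ) 1] 0, 0 < slope g 0 t :=
    (hslope.mono_left hle).eventually (eventually_gt_nhds hx)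
  have hmem : ∀ᶠ t in 𝓝[Set.Ioo (0:ℝ) 1] 0, t ∈ Set.Ioo (0:ℝ) 1 :=
    eventually_mem_nhdsWithin
  obtain ⟨t0, hs0, ht0⟩ := (hev.and hmem).exists
  have hg00 : g 0 = 0 := by simp [hg, hf, Real.Gamma_one]
  rw [slope_def_field, hg00, sub_zero, sub_zero] at hs0
  have hgt0 : 0 < g t0 := by
    have hm := mul_pos hs0 ht0.1
    rwa [div_mul_cancel₀ _ (ne_of_gt ht0.1)] at hm
  calc (0:ℝ) < g t0 := hgt0
    _ ≤ _ := hmax t0 ht0
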